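/- Let Ω ⊂ ℝ^d be a nonempty compact convex set, let μ_src and μ_tgt be Borel probability measures supported in Ω, and let H ∈ ℕ. Suppose V⋆ = (V⋆_0,…,V⋆_{H+1}) is feasible for the dynamic dual LP on Ω with horizon H and its objective ∫V⋆_0 dμ_src − ∫V⋆_{H+1} dμ_tgt is greater than or equal to the objective of every feasible family (i.e. V⋆ is optimal). Then the pair (V⋆_0, V⋆_{H+1}) is feasible for the static dual problem on Ω, and its objective ∫V⋆_0 dμ_src − ∫V⋆_{H+1} dμ_tgt is greater than or equal to the objective ∫W_0 dμ_src − ∫W_1 dμ_tgt of every pair (W_0, W_1) feasible for the static dual problem; in particular, the supremum of the dynamic dual objective over feasible families equals the supremum of the static dual objective over feasible pairs. -/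

import Mathlib

open MeasureTheory

/-- Feasibility for the dynamic dual LP on `Ω` with horizon `H'`: the functions
`V_0,…,V_{H'+1}` are continuous on `Ω` and satisfy
`V_h(x) ≤ ((H'+1)/2)‖x−y‖² + V_{h+1}(y)` for all `h ≤ H'` and `x, y ∈ Ω`. -/
def DynDualFeasible {d : ℕ} (Ω : Set (EuclideanSpace ℝ (Fin d))) (H' : ℕ)
    (V : ℕ → EuclideanSpace ℝ (Fin d) → ℝ) : Prop :=
  (∀ h ≤ H' + 1, ContinuousOn (V h) Ω) ∧
  ∀ h ≤ H', ∀ x ∈ Ω, ∀ y ∈ Ω,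
    V h x ≤ ((H' : ℝ) + 1) / 2 * ‖x - y‖ ^ 2 + V (h + 1) y

/-- Feasibility for the static dual problem on `Ω`: `W_0, W_1` are continuous on `Ω` and
`W_0(x) ≤ ½‖x−y‖² + W_1(y)` for all `x, y ∈ Ω`. -/
def StaticDualFeasible {d : ℕ} (Ω : Set (EuclideanSpace ℝ (Fin d)))
    (W₀ W₁ : EuclideanSpace ℝ (Fin d) → ℝ) : Prop :=
  ContinuousOn W₀ Ω ∧ ContinuousOn W₁ Ω ∧
  ∀ x ∈ Ω, ∀ y ∈ Ω, W₀ x ≤ 1 / 2 * ‖x - y‖ ^ 2 + W₁ y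


-- key algebraic inequality
lemma key_ineq (A a b m : ℝ) (hA : 0 ≤ A) (ha : 0 ≤ a) (hb : 0 ≤ b) (hm : 2 ≤ m) :
    (A/m)*(a+b)^2 ≤ A*a^2 + (A/(m-1))*b^2 := by
  have ht : (0:ℝ) < m - 1 := by linarith
  have hm0 : (0:ℝ) < m := by linarith
  have h2 : (m-1) * (a+b)^2 ≤ (m-1)*m*a^2 + m*b^2 := by nlinarith [sq_nonneg ((m-1)*a - b)]
  have h1 : (a+b)^2 ≤ m*a^2 + m/(m-1)*b^2 := by
    rw [show m*a^2 + m/(m-1)*b^2 = ((m-1)*m*a^2 + m*b^2)/(m-1) by field_simp,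
      le_div_iff₀ ht]
    linarith
  calc (A/m)*(a+b)^2 ≤ (A/m)*(m*a^2 + m/(m-1)*b^2) :=
        mul_le_mul_of_nonneg_left h1 (by positivity)
    _ = A*a^2 + (A/(m-1))*b^2 := by field_simp

-- integrability
lemma integrable_of_contOn {d : ℕ} {Ω : Set (EuclideanSpace ℝ (Fin d))}
    (hcomp : IsCompact Ω) (μ : Measure (EuclideanSpace ℝ (Fin d))) [IsProbabilityMeasure μ]
    (hμ : μ Ωᶜ = 0) {f : EuclideanSpace ℝ (Fin d) → ℝ} (hf : ContinuousOn f Ω) :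
    Integrable f μ := by
  have hres : μ.restrict Ω = μ := by
    apply Measure.restrict_eq_self_of_ae_mem
    rw [Filter.eventually_iff, mem_ae_iff]
    simpa using hμ
  rw [← hres]
  exact hf.integrableOn_compact hcomp

noncomputable def Qc {d : ℕ} (Ω : Set (EuclideanSpace ℝ (Fin d)))
    (W₁ : EuclideanSpace ℝ (Fin d) → ℝ) (c : ℝ) (x : EuclideanSpace ℝ (Fin d)) : ℝ :=
  sInf ((fun y => c * ‖x - y‖^2 + W₁ y) '' Ω)

variable {d : ℕ} {Ω : Set (EuclideanSpace ℝ (Fin d))} {W₁ : EuclideanSpace ℝ (Fin d) → ℝ}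

lemma contOn_aux (hW₁ : ContinuousOn W₁ Ω) (c : ℝ) (x : EuclideanSpace ℝ (Fin d)) :
    ContinuousOn (fun y => c * ‖x - y‖^2 + W₁ y) Ω :=
  (((continuous_const.sub continuous_id).norm.pow 2).continuousOn.const_smul c).add hW₁

lemma Qc_le (hne : Ω.Nonempty) (hcomp : IsCompact Ω) (hW₁ : ContinuousOn W₁ Ω)
    (c : ℝ) (x : EuclideanSpace ℝ (Fin d)) {z : EuclideanSpace ℝ (Fin d)} (hz : z ∈ Ω) :
    Qc Ω W₁ c x ≤ c * ‖x - z‖^2 + W₁ z := by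
  apply csInf_le ((hcomp.image_of_continuousOn (contOn_aux hW₁ c x)).bddBelow)
  exact Set.mem_image_of_mem _ hz

lemma Qc_exists_min (hne : Ω.Nonempty) (hcomp : IsCompact Ω) (hW₁ : ContinuousOn W₁ Ω)
    (c : ℝ) (x : EuclideanSpace ℝ (Fin d)) :
    ∃ y ∈ Ω, Qc Ω W₁ c x = c * ‖x - y‖^2 + W₁ y := by
  have hK : IsCompact ((fun y => c * ‖x - y‖^2 + W₁ y) '' Ω) :=
    hcomp.image_of_continuousOn (contOn_aux hW₁ c x)
  have := hK.sInf_mem (hne.image _)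
  obtain ⟨y, hy, hyeq⟩ := this
  exact ⟨y, hy, hyeq.symm⟩

lemma Qc_continuousOn (hne : Ω.Nonempty) (hcomp : IsCompact Ω) (hW₁ : ContinuousOn W₁ Ω)
    {c : ℝ} (hc : 0 ≤ c) : ContinuousOn (Qc Ω W₁ c) Ω := by
  obtain ⟨R, hR⟩ : ∃ R, ∀ z ∈ Ω, ‖z‖ ≤ R := hcomp.isBounded.exists_norm_le
  obtain ⟨x₀, hx₀⟩ := id hne
  have hR0 : 0 ≤ R := le_trans (norm_nonneg x₀) (hR x₀ hx₀)
  have key : ∀ x ∈ Ω, ∀ x' ∈ Ω, Qc Ω W₁ c x ≤ Qc Ω W₁ c x' + c*(4*R)*‖x - x'‖ := by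
    intro x hx x' hx'
    obtain ⟨y, hy, hyeq⟩ := Qc_exists_min hne hcomp hW₁ c x'
    have h1 : Qc Ω W₁ c x ≤ c * ‖x - y‖^2 + W₁ y := Qc_le hne hcomp hW₁ c x hy
    have ha : ‖x - y‖ ≤ 2*R := by
      calc ‖x - y‖ ≤ ‖x‖ + ‖y‖ := norm_sub_le x y
        _ ≤ 2*R := by have := hR x hx; have := hR y hy; linarith
    have hb : ‖x' - y‖ ≤ 2*R := by
      calc ‖x' - y‖ ≤ ‖x'‖ + ‖y‖ := norm_sub_le x' y
        _ ≤ 2*R := by have := hR x' hx'; have := hR y hy; linarith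
    have hab : ‖x - y‖ - ‖x' - y‖ ≤ ‖x - x'‖ := by
      have := norm_sub_norm_le (x - y) (x' - y)
      have h : (x - y) - (x' - y) = x - x' := by abel
      rwa [h] at this
    have h2 : ‖x - y‖^2 - ‖x' - y‖^2 ≤ 4*R*‖x - x'‖ := by
      have hsum : ‖x - y‖ + ‖x' - y‖ ≤ 4*R := by linarith
      have hnn : (0:ℝ) ≤ ‖x - y‖ + ‖x' - y‖ := by positivity
      nlinarith [norm_nonneg (x - x')]
    have h3 : c * ‖x - y‖^2 ≤ c * ‖x' - y‖^2 + c*(4*R)*‖x - x'‖ := by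
      nlinarith [mul_le_mul_of_nonneg_left h2 hc]
    rw [hyeq]; linarith
  have hlip : LipschitzOnWith (c*(4*R)).toNNReal (Qc Ω W₁ c) Ω := by
    apply LipschitzOnWith.of_dist_le_mul
    intro x hx y hy
    rw [Real.dist_eq, Real.coe_toNNReal _ (by positivity), dist_eq_norm]
    rw [abs_sub_le_iff]
    constructor
    · have := key x hx y hy; linarith
    · have := key y hy x hx
      rw [norm_sub_rev] at this; linarith
  exact hlip.continuousOn

lemma dyn_to_static_pt {d : ℕ} {Ω : Set (EuclideanSpace ℝ (Fin d))} (hconv : Convex ℝ Ω)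
    {H : ℕ} {V : ℕ → EuclideanSpace ℝ (Fin d) → ℝ} (hV : DynDualFeasible Ω H V)
    {x y : EuclideanSpace ℝ (Fin d)} (hx : x ∈ Ω) (hy : y ∈ Ω) :
    V 0 x ≤ 1/2 * ‖x - y‖^2 + V (H+1) y := by
  set N : ℕ := H + 1 with hN
  have hN0 : (0:ℝ) < N := by positivity
  set p : ℕ → EuclideanSpace ℝ (Fin d) := fun k => x + ((k:ℝ)/N) • (y - x) with hp
  have hmem : ∀ k ≤ N, p k ∈ Ω := by
    intro k hk
    have ht0 : (0:ℝ) ≤ (k:ℝ)/N := by positivity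
    have ht1 : (k:ℝ)/N ≤ 1 := by
      rw [div_le_one hN0]; exact_mod_cast hk
    have heq : p k = (1 - (k:ℝ)/N) • x + ((k:ℝ)/N) • y := by
      simp only [hp]; module
    rw [heq]
    exact hconv hx hy (by linarith) ht0 (by ring)
  have hstep : ∀ k, ‖p k - p (k+1)‖^2 = ‖x - y‖^2 / N^2 := by
    intro k
    have : p k - p (k+1) = (1/(N:ℝ)) • (x - y) := by
      simp only [hp]; push_cast; module
    rw [this, norm_smul, Real.norm_eq_abs, abs_of_pos (by positivity : (0:ℝ) < 1/(N:ℝ)), mul_pow, div_pow,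
      one_pow]
    ring
  have claim : ∀ n ≤ N, V 0 x ≤ n * (‖x - y‖^2 / (2*N)) + V n (p n) := by
    intro n hn
    induction n with
    | zero =>
      simp [hp]
    | succ k ih =>
      have hk : k ≤ H := by omega
      have ihk := ih (by omega)
      have hfeas := hV.2 k hk (p k) (hmem k (by omega)) (p (k+1)) (hmem (k+1) hn)
      have hc : ((H:ℝ)+1)/2 * ‖p k - p (k+1)‖^2 = ‖x - y‖^2 / (2*N) := by
        rw [hstep k]
        have : ((H:ℝ)+1) = N := by rw [hN]; push_cast; ring
        rw [this]
        field_simp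
      rw [hc] at hfeas
      have hck : ((k+1:ℕ):ℝ) = (k:ℝ)+1 := by push_cast; ring
      rw [hck]
      linarith
  have hfin := claim N le_rfl
  have hpN : p N = y := by simp only [hp]; rw [div_self (ne_of_gt hN0)]; module
  rw [hpN] at hfin
  have : (N:ℝ) * (‖x - y‖^2 / (2*N)) = 1/2 * ‖x - y‖^2 := by field_simp
  rw [this] at hfin
  exact hfin

/-- an optimal solution `V⋆` of the dynamic dual LP yields, via its first and
last components, a feasible pair for the static dual whose objective dominates all static
feasible pairs; in particular the two optimal dual values coincide. -/
theorem stmt10 {d : ℕ} (Ω : Set (EuclideanSpace ℝ (Fin d)))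
    (hne : Ω.Nonempty) (hcomp : IsCompact Ω) (hconv : Convex ℝ Ω)
    (μsrc μtgt : Measure (EuclideanSpace ℝ (Fin d)))
    [IsProbabilityMeasure μsrc] [IsProbabilityMeasure μtgt]
    (hsrc : μsrc Ωᶜ = 0) (htgt : μtgt Ωᶜ = 0) (H : ℕ)
    (V : ℕ → EuclideanSpace ℝ (Fin d) → ℝ)
    (hVfeas : DynDualFeasible Ω H V)
    (hVopt : ∀ W : ℕ → EuclideanSpace ℝ (Fin d) → ℝ, DynDualFeasible Ω H W →
      ∫ x, W 0 x ∂μsrc - ∫ x, W (H + 1) x ∂μtgt ≤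
        ∫ x, V 0 x ∂μsrc - ∫ x, V (H + 1) x ∂μtgt) :
    StaticDualFeasible Ω (V 0) (V (H + 1)) ∧
    (∀ W₀ W₁, StaticDualFeasible Ω W₀ W₁ →
      ∫ x, W₀ x ∂μsrc - ∫ x, W₁ x ∂μtgt ≤
        ∫ x, V 0 x ∂μsrc - ∫ x, V (H + 1) x ∂μtgt) ∧
    sSup {r : ℝ | ∃ W : ℕ → EuclideanSpace ℝ (Fin d) → ℝ, DynDualFeasible Ω H W ∧
        r = ∫ x, W 0 x ∂μsrc - ∫ x, W (H + 1) x ∂μtgt} =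
      sSup {r : ℝ | ∃ W₀ W₁, StaticDualFeasible Ω W₀ W₁ ∧
        r = ∫ x, W₀ x ∂μsrc - ∫ x, W₁ x ∂μtgt} := by
  have hstat : StaticDualFeasible Ω (V 0) (V (H+1)) :=
    ⟨hVfeas.1 0 (by omega), hVfeas.1 (H+1) le_rfl,
      fun x hx y hy => dyn_to_static_pt hconv hVfeas hx hy⟩
  have hdom : ∀ W₀ W₁, StaticDualFeasible Ω W₀ W₁ →
      ∫ x, W₀ x ∂μsrc - ∫ x, W₁ x ∂μtgt ≤
        ∫ x, V 0 x ∂μsrc - ∫ x, V (H + 1) x ∂μtgt := by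
    intro W₀ W₁ hW
    obtain ⟨hW₀c, hW₁c, hWineq⟩ := hW
    set c : ℕ → ℝ := fun h => ((H:ℝ)+1)/(2*((H:ℝ)+1-(h:ℝ))) with hc
    have hcpos : ∀ h ≤ H, 0 < c h := by
      intro h hh
      have hhr : (h:ℝ) ≤ H := by exact_mod_cast hh
      exact div_pos (by positivity) (by linarith)
    set W' : ℕ → EuclideanSpace ℝ (Fin d) → ℝ :=
      fun h => if h ≤ H then Qc Ω W₁ (c h) else W₁ with hW'
    have hW'feas : DynDualFeasible Ω H W' := by
      constructor
      · intro h hh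
        by_cases hhH : h ≤ H
        · simpa only [hW', if_pos hhH] using
            Qc_continuousOn hne hcomp hW₁c (hcpos h hhH).le
        · simpa only [hW', if_neg hhH] using hW₁c
      · intro h hh x hx y hy
        have hA : (0:ℝ) ≤ ((H:ℝ)+1)/2 := by positivity
        by_cases hhH : h + 1 ≤ H
        · obtain ⟨z, hz, hzeq⟩ := Qc_exists_min hne hcomp hW₁c (c (h+1)) y
          have h1 : W' h x ≤ c h * ‖x - z‖^2 + W₁ z := by
            simp only [hW', if_pos hh]; exact Qc_le hne hcomp hW₁c _ x hz
          set m : ℝ := (H:ℝ)+1-(h:ℝ) with hm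
          have hm2 : (2:ℝ) ≤ m := by
            have : (h:ℝ)+1 ≤ H := by exact_mod_cast hhH
            simp only [hm]; linarith
          have hch : c h = (((H:ℝ)+1)/2)/m := by
            simp only [hc, hm]; rw [div_div]
          have hch1 : c (h+1) = (((H:ℝ)+1)/2)/(m-1) := by
            simp only [hc, hm]; rw [div_div]; push_cast; ring_nf
          have htri : ‖x - z‖ ≤ ‖x - y‖ + ‖y - z‖ := by
            have : x - z = (x - y) + (y - z) := by abel
            rw [this]; exact norm_add_le _ _
          have h2 : c h * ‖x - z‖^2 ≤
              ((H:ℝ)+1)/2 * ‖x - y‖^2 + c (h+1) * ‖y - z‖^2 := by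
            rw [hch, hch1]
            calc (((H:ℝ)+1)/2)/m * ‖x - z‖^2
                ≤ (((H:ℝ)+1)/2)/m * (‖x - y‖ + ‖y - z‖)^2 := by
                  apply mul_le_mul_of_nonneg_left _ (by positivity)
                  exact pow_le_pow_left₀ (norm_nonneg _) htri 2
              _ ≤ ((H:ℝ)+1)/2 * ‖x - y‖^2 + (((H:ℝ)+1)/2)/(m-1) * ‖y - z‖^2 :=
                  key_ineq _ _ _ _ hA (norm_nonneg _) (norm_nonneg _) hm2
          have h3 : W' (h+1) y = c (h+1) * ‖y - z‖^2 + W₁ z := by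
            simp only [hW', if_pos hhH]; exact hzeq
          rw [h3]; linarith
        · have hhe : h = H := by omega
          rw [hhe]
          have hcH : c H = ((H:ℝ)+1)/2 := by
            simp only [hc]
            rw [show (H:ℝ)+1-(H:ℝ) = 1 by ring, mul_one]
          have h1 : W' H x ≤ c H * ‖x - y‖^2 + W₁ y := by
            simp only [hW', if_pos le_rfl]; exact Qc_le hne hcomp hW₁c _ x hy
          have h2 : W' (H+1) y = W₁ y := by
            simp only [hW', if_neg (by omega : ¬ H + 1 ≤ H)]
          rw [h2, ← hcH]; exact h1
    have hW0le : ∀ x ∈ Ω, W₀ x ≤ W' 0 x := by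
      intro x hx
      simp only [hW', if_pos (Nat.zero_le H)]
      apply le_csInf (hne.image _)
      rintro b ⟨y, hy, rfl⟩
      have hc0 : c 0 = 1/2 := by
        simp only [hc]
        rw [Nat.cast_zero, sub_zero, div_eq_div_iff (by positivity) (by norm_num)]
        ring
      rw [hc0]
      simpa using hWineq x hx y hy
    have hint₀ : Integrable W₀ μsrc := integrable_of_contOn hcomp μsrc hsrc hW₀c
    have hint₀' : Integrable (W' 0) μsrc :=
      integrable_of_contOn hcomp μsrc hsrc (hW'feas.1 0 (by omega))
    have hmono : ∫ x, W₀ x ∂μsrc ≤ ∫ x, W' 0 x ∂μsrc := by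
      apply integral_mono_ae hint₀ hint₀'
      have hae : ∀ᵐ x ∂μsrc, x ∈ Ω := by
        rw [Filter.eventually_iff, mem_ae_iff]; simpa using hsrc
      filter_upwards [hae] with x hx using hW0le x hx
    have hlast : W' (H+1) = W₁ := by
      simp only [hW', if_neg (by omega : ¬ H + 1 ≤ H)]
    have hopt := hVopt W' hW'feas
    rw [hlast] at hopt
    linarith
  refine ⟨hstat, hdom, ?_⟩
  have hg1 : IsGreatest {r : ℝ | ∃ W : ℕ → EuclideanSpace ℝ (Fin d) → ℝ,
      DynDualFeasible Ω H W ∧ r = ∫ x, W 0 x ∂μsrc - ∫ x, W (H + 1) x ∂μtgt}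
      (∫ x, V 0 x ∂μsrc - ∫ x, V (H + 1) x ∂μtgt) := by
    constructor
    · exact ⟨V, hVfeas, rfl⟩
    · rintro r ⟨W, hW, rfl⟩; exact hVopt W hW
  have hg2 : IsGreatest {r : ℝ | ∃ W₀ W₁, StaticDualFeasible Ω W₀ W₁ ∧
      r = ∫ x, W₀ x ∂μsrc - ∫ x, W₁ x ∂μtgt}
      (∫ x, V 0 x ∂μsrc - ∫ x, V (H + 1) x ∂μtgt) := by
    constructor
    · exact ⟨V 0, V (H+1), hstat, rfl⟩
    · rintro r ⟨W₀, W₁, hW, rfl⟩; exact hdom W₀ W₁ hW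
  rw [hg1.csSup_eq, hg2.csSup_eq]
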